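/- Let a, b ∈ ℂ with (a,b) ≠ (0,0), and let h : ℤ → ℂ[λ] satisfy ((a/2)λ - μ + b/2)·h_{i+j}(λ+μ) = -μ·c^i·h_j(μ) in ℂ[λ,μ] for all i, j ∈ ℤ, where c ∈ ℂ is fixed. Then h_i = 0 for all i ∈ ℤ. -/
import Mathlib


/-- Equation (6.9): if ((a/2)λ - μ + b/2) h_{i+j}(λ+μ) = -μ c^i h_j(μ) for all i,j and
(a,b) ≠ (0,0), then all h_i = 0. -/
theorem stmt8 (a b c : ℂ) (hab : ¬(a = 0 ∧ b = 0)) (h : ℤ → Polynomial ℂ)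
    (hyp : ∀ (i j : ℤ) (l m : ℂ),
      ((a/2)*l - m + b/2) * (h (i + j)).eval (l + m) = -m * c^i * (h j).eval m) :
    ∀ i : ℤ, h i = 0 := by
  intro i
  have key : ∀ l : ℂ, (a/2)*l + b/2 ≠ 0 → (h i).eval l = 0 := by
    intro l hl
    have := hyp i 0 l 0
    simp only [add_zero, sub_zero, neg_zero, zero_mul] at this
    exact (mul_eq_zero.mp this).resolve_left hl
  apply Polynomial.eq_zero_of_infinite_isRoot
  have hp : (Polynomial.C (a/2) * Polynomial.X + Polynomial.C (b/2) : Polynomial ℂ) ≠ 0 := by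
    intro hp
    rcases Classical.em (a = 0) with ha | ha
    · have hb : b ≠ 0 := fun hb => hab ⟨ha, hb⟩
      have := congrArg (Polynomial.eval 0) hp
      simp at this
      exact hb this
    · have := congrArg Polynomial.natDegree hp
      rw [Polynomial.natDegree_linear (by simpa using ha)] at this
      simp at this
  have hfin : {x : ℂ | (a/2)*x + b/2 = 0}.Finite := by
    have := Polynomial.finite_setOf_isRoot hp
    apply this.subset
    intro x hx
    simp only [Set.mem_setOf_eq] at hx ⊢
    simp [Polynomial.IsRoot, hx]
  exact Set.Infinite.mono (fun x hx => key x hx) (Set.Finite.infinite_compl hfin)
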